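/- Define f(t) := ∫₀¹ sin(u·t)·T_{2n}(u)/√(1−u²) du and for the indices shifted by one define the analogous integrals with T_{2n±1} and cosine. Then the Chebyshev recurrence T_{2n+1}(x) + T_{2n−1}(x) = 2x·T_{2n}(x) implies the differentiation formula 2·s′_{0,2n}(t) = (2n−1)·s_{−1,2n−1}(t) − (2n+1)·s_{−1,2n+1}(t), where s_{0,2n}(t) = (−1)ⁿ ∫₀¹ sin(ut)T_{2n}(u)/√(1−u²) du and s_{−1,2m+1}(t) = (−1)^{m+1}/(2m+1) ∫₀¹ cos(ut)T_{2m+1}(u)/√(1−u²) du. -/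

import Mathlib

open Real Polynomial

section Aux
open MeasureTheory Set intervalIntegral

set_option maxHeartbeats 1000000

private lemma div_le_div_same' {a b c : ℝ} (h : a ≤ b) (hc : 0 ≤ c) : a / c ≤ b / c := by
  rcases hc.eq_or_lt with h0 | h0
  · simp [← h0]
  · exact (div_le_div_iff_of_pos_right h0).mpr h

private lemma integ_aux (g : ℝ → ℝ) (hg : Continuous g) :
    IntervalIntegrable (fun u => g u / Real.sqrt (1 - u ^ 2)) volume 0 1 := by
  obtain ⟨C, hC⟩ := (isCompact_Icc (a := (0:ℝ)) (b := 1)).exists_bound_of_continuousOn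
    hg.continuousOn
  have hC0 : 0 ≤ C := le_trans (norm_nonneg _) (hC 0 (by norm_num))
  have hb : IntervalIntegrable (fun u : ℝ => C * (1 - u) ^ (-(1/2) : ℝ)) volume 0 1 := by
    have h1 : IntervalIntegrable (fun x : ℝ => x ^ (-(1/2) : ℝ)) volume 0 1 :=
      intervalIntegrable_rpow' (by norm_num)
    have h2 := (h1.comp_sub_left 1).symm
    norm_num at h2
    exact h2.const_mul C
  apply hb.mono_fun
  · apply Measurable.aestronglyMeasurable
    exact hg.measurable.div (Real.continuous_sqrt.comp (by continuity)).measurable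
  · rw [Filter.EventuallyLE, ae_restrict_iff' measurableSet_uIoc]
    refine Filter.Eventually.of_forall fun u hu => ?_
    rw [uIoc_of_le (by norm_num : (0:ℝ) ≤ 1)] at hu
    obtain ⟨hu0, hu1⟩ := hu
    have h1u : (0:ℝ) ≤ 1 - u := by linarith
    have hrw : (1 - u) ^ (-(1/2) : ℝ) = 1 / Real.sqrt (1 - u) := by
      rw [Real.rpow_neg h1u, Real.sqrt_eq_rpow]
      norm_num
    have hC' : |g u| ≤ C := hC u ⟨le_of_lt hu0, hu1⟩
    have hsq : Real.sqrt (1 - u) ≤ Real.sqrt (1 - u ^ 2) :=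
      Real.sqrt_le_sqrt (by nlinarith)
    simp only [Real.norm_eq_abs, abs_div, abs_of_nonneg (Real.sqrt_nonneg _)]
    rw [abs_of_nonneg (by positivity : 0 ≤ C * (1 - u) ^ (-(1/2) : ℝ)), hrw]
    rcases eq_or_lt_of_le (Real.sqrt_nonneg (1 - u ^ 2)) with h0 | h0
    · rw [← h0, div_zero]
      positivity
    · calc |g u| / Real.sqrt (1 - u ^ 2) ≤ C / Real.sqrt (1 - u ^ 2) :=
            div_le_div_same' hC' (le_of_lt h0)
        _ ≤ C / Real.sqrt (1 - u) := by
            have hu1' : u < 1 := by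
              by_contra hcon
              have : u = 1 := le_antisymm hu1 (not_lt.mp hcon)
              rw [this] at h0; norm_num at h0
            have hpos : 0 < Real.sqrt (1 - u) := Real.sqrt_pos.mpr (by linarith)
            gcongr
        _ = C * (1 / Real.sqrt (1 - u)) := by ring

private lemma key_deriv (p : ℝ[X]) (t : ℝ) :
    HasDerivAt (fun x => ∫ u in (0:ℝ)..1, Real.sin (u * x) * p.eval u / Real.sqrt (1 - u ^ 2))
      (∫ u in (0:ℝ)..1, u * Real.cos (u * t) * p.eval u / Real.sqrt (1 - u ^ 2)) t := by
  have hmeas : ∀ x : ℝ, AEStronglyMeasurable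
      (fun u => Real.sin (u * x) * p.eval u / Real.sqrt (1 - u ^ 2))
      (volume.restrict (Set.uIoc (0:ℝ) 1)) := by
    intro x
    apply Measurable.aestronglyMeasurable
    exact ((Real.continuous_sin.comp (continuous_id.mul continuous_const)).mul
      p.continuous).measurable.div (Real.continuous_sqrt.comp (by continuity)).measurable
  have hmeas' : AEStronglyMeasurable
      (fun u => u * Real.cos (u * t) * p.eval u / Real.sqrt (1 - u ^ 2))
      (volume.restrict (Set.uIoc (0:ℝ) 1)) := by
    apply Measurable.aestronglyMeasurable
    exact ((continuous_id.mul (Real.continuous_cos.comp (continuous_id.mul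
      continuous_const))).mul p.continuous).measurable.div
      (Real.continuous_sqrt.comp (by continuity)).measurable
  have h := intervalIntegral.hasDerivAt_integral_of_dominated_loc_of_deriv_le
    (F := fun x u => Real.sin (u * x) * p.eval u / Real.sqrt (1 - u ^ 2))
    (F' := fun x u => u * Real.cos (u * x) * p.eval u / Real.sqrt (1 - u ^ 2))
    (x₀ := t) (a := 0) (b := 1) (μ := volume)
    (bound := fun u => |u| * |p.eval u| / Real.sqrt (1 - u ^ 2))
    Filter.univ_mem (Filter.Eventually.of_forall hmeas)
    (integ_aux _
      ((Real.continuous_sin.comp (continuous_id.mul continuous_const)).mul p.continuous))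
    hmeas' ?_ ?_ ?_
  · exact h.2
  · refine Filter.Eventually.of_forall fun u _ x _ => ?_
    simp only [Real.norm_eq_abs, abs_div, abs_of_nonneg (Real.sqrt_nonneg _)]
    apply div_le_div_same' _ (Real.sqrt_nonneg _)
    rw [abs_mul, abs_mul]
    have h1 : |Real.cos (u * x)| ≤ 1 := Real.abs_cos_le_one _
    nlinarith [mul_nonneg (mul_nonneg (abs_nonneg u) (abs_nonneg (p.eval u))) (sub_nonneg.mpr h1)]
  · exact integ_aux (fun u => |u| * |p.eval u|)
      (continuous_abs.mul (continuous_abs.comp p.continuous))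
  · refine Filter.Eventually.of_forall fun u _ x _ => ?_
    have h1 : HasDerivAt (fun x : ℝ => u * x) u x := by
      simpa using (hasDerivAt_id x).const_mul u
    have h2 : HasDerivAt (fun x : ℝ => Real.sin (u * x)) (Real.cos (u * x) * u) x :=
      (Real.hasDerivAt_sin (u * x)).comp x h1
    have h3 := (h2.mul_const (p.eval u)).div_const (Real.sqrt (1 - u ^ 2))
    convert h3 using 1
    · rfl
    ring

end Aux

/-- `s_{0,2n}(t)` as the integral `(-1)^n ∫₀¹ sin(ut) T_{2n}(u)/√(1-u²) du`. -/
noncomputable def s0 (n : ℕ) (t : ℝ) : ℝ :=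
  (-1 : ℝ) ^ n * ∫ u in (0:ℝ)..1,
    Real.sin (u * t) * (Polynomial.Chebyshev.T ℝ (2 * n)).eval u / Real.sqrt (1 - u ^ 2)

/-- `s_{-1,2m+1}(t)` as the integral `(-1)^{m+1}/(2m+1) ∫₀¹ cos(ut) T_{2m+1}(u)/√(1-u²) du`. -/
noncomputable def sneg1 (m : ℕ) (t : ℝ) : ℝ :=
  (-1 : ℝ) ^ (m + 1) / (2 * (m : ℝ) + 1) * ∫ u in (0:ℝ)..1,
    Real.cos (u * t) * (Polynomial.Chebyshev.T ℝ (2 * m + 1)).eval u / Real.sqrt (1 - u ^ 2)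

theorem stmt5 (n : ℕ) (hn : 1 ≤ n)
    (hcheb : ∀ x : ℝ, (Polynomial.Chebyshev.T ℝ (2 * n + 1)).eval x +
      (Polynomial.Chebyshev.T ℝ (2 * n - 1)).eval x =
      2 * x * (Polynomial.Chebyshev.T ℝ (2 * n)).eval x) :
    ∀ t : ℝ, 2 * deriv (s0 n) t =
      (2 * (n : ℝ) - 1) * sneg1 (n - 1) t - (2 * (n : ℝ) + 1) * sneg1 n t := by
  intro t
  have hint : ∀ k : ℤ, IntervalIntegrable
      (fun u => Real.cos (u * t) * (Polynomial.Chebyshev.T ℝ k).eval u / Real.sqrt (1 - u ^ 2))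
      MeasureTheory.volume 0 1 := fun k =>
    integ_aux _ ((Real.continuous_cos.comp (continuous_id.mul continuous_const)).mul
      (Polynomial.continuous _))
  set I : ℤ → ℝ := fun k => ∫ u in (0:ℝ)..1,
    Real.cos (u * t) * (Polynomial.Chebyshev.T ℝ k).eval u / Real.sqrt (1 - u ^ 2) with hI
  -- derivative of s0
  have hd : deriv (s0 n) t = (-1 : ℝ) ^ n * ∫ u in (0:ℝ)..1,
      u * Real.cos (u * t) * (Polynomial.Chebyshev.T ℝ (2 * n)).eval u
        / Real.sqrt (1 - u ^ 2) := by
    unfold s0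
    exact ((key_deriv (Polynomial.Chebyshev.T ℝ (2 * n)) t).const_mul ((-1 : ℝ) ^ n)).deriv
  have hsplit : (2 : ℝ) * ∫ u in (0:ℝ)..1,
      u * Real.cos (u * t) * (Polynomial.Chebyshev.T ℝ (2 * n)).eval u
        / Real.sqrt (1 - u ^ 2) = I (2 * n + 1) + I (2 * n - 1) := by
    rw [hI, ← intervalIntegral.integral_add (hint _) (hint _),
      ← intervalIntegral.integral_const_mul]
    apply intervalIntegral.integral_congr
    intro u _
    simp only
    linear_combination (-(Real.cos (u * t) / Real.sqrt (1 - u ^ 2))) * hcheb u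
  -- index identities
  have hidx : (2 * ((n - 1 : ℕ) : ℤ) + 1) = 2 * (n : ℤ) - 1 := by omega
  have hcast : (((n - 1 : ℕ)) : ℝ) = (n : ℝ) - 1 := by
    push_cast [Nat.cast_sub hn]
    ring
  have hpow : n - 1 + 1 = n := Nat.succ_pred_eq_of_pos hn
  have hne1 : (2 * (n : ℝ) - 1) ≠ 0 := by
    have : (1 : ℝ) ≤ (n : ℝ) := by exact_mod_cast hn
    intro h; linarith [h]
  have hne2 : (2 * (n : ℝ) + 1) ≠ 0 := by positivity
  have hs1 : sneg1 (n - 1) t = (-1 : ℝ) ^ n / (2 * (n : ℝ) - 1) * I (2 * (n : ℤ) - 1) := by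
    unfold sneg1
    rw [hpow, hcast, hidx, hI]
    have : 2 * ((n : ℝ) - 1) + 1 = 2 * (n : ℝ) - 1 := by ring
    rw [this]
  have hs2 : sneg1 n t = (-1 : ℝ) ^ (n + 1) / (2 * (n : ℝ) + 1) * I (2 * (n : ℤ) + 1) := by
    rfl
  rw [hd, hs1, hs2]
  have : (2 : ℝ) * ((-1 : ℝ) ^ n * ∫ u in (0:ℝ)..1,
      u * Real.cos (u * t) * (Polynomial.Chebyshev.T ℝ (2 * n)).eval u
        / Real.sqrt (1 - u ^ 2)) = (-1 : ℝ) ^ n * (I (2 * n + 1) + I (2 * n - 1)) := by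
    rw [← hsplit]; ring
  rw [this]
  field_simp
  ring
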